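/- Let G be a finite group with subgroups H ≤ A ⊴ G (A normal in G), and suppose that |A| is odd or the index |G:A| is odd. Then A is a perfect code of the pair (G,H) if and only if G = N_G(H)A. -/

import Mathlib

open scoped Pointwise

/-- A subset `C` of the vertices of a graph `Γ` is an `(r,s)`-regular set if every vertex
in `C` has exactly `r` neighbours in `C` and every vertex outside `C` has exactly `s`
neighbours in `C`. -/
def IsRegularVertexSet {V : Type*} (Γ : SimpleGraph V) (C : Set V) (r s : ℕ) : Prop :=
  (∀ v ∈ C, {w | w ∈ C ∧ Γ.Adj v w}.ncard = r) ∧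
  ∀ v ∉ C, {w | w ∈ C ∧ Γ.Adj v w}.ncard = s

/-- The coset graph `Cos(G,H,U)` on the left cosets of `H` in `G`:
`g₁H` and `g₂H` are adjacent iff `g₁⁻¹ g₂ ∈ U`. -/
def cosetGraph {G : Type*} [Group G] (H : Subgroup G) (U : Set G) : SimpleGraph (G ⧸ H) :=
  SimpleGraph.fromRel fun C D =>
    ∃ g₁ g₂ : G, QuotientGroup.mk g₁ = C ∧ QuotientGroup.mk g₂ = D ∧ g₁⁻¹ * g₂ ∈ U

/-- `U` is a valid connection set for a coset graph `Cos(G,H,U)`: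
inverse-closed, disjoint from `H`, and a union of double cosets of `H` (`HUH = U`). -/
def IsCosetGraphConnectionSet {G : Type*} [Group G] (H : Subgroup G) (U : Set G) : Prop :=
  U⁻¹ = U ∧ (H : Set G) ∩ U = ∅ ∧ (H : Set G) * U * (H : Set G) = U

/-- `A` is an `(r,s)`-regular set of the pair `(G,H)`: there is a coset graph
`Cos(G,H,U)` in which the set of left cosets of `H` in `A` is an `(r,s)`-regular set. -/
def IsRegularSetOfPair {G : Type*} [Group G] (H A : Subgroup G) (r s : ℕ) : Prop :=
  ∃ U : Set G, IsCosetGraphConnectionSet H U ∧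
    IsRegularVertexSet (cosetGraph H U)
      {C : G ⧸ H | ∃ a ∈ A, QuotientGroup.mk a = C} r s

/-- `A` is a perfect code of the pair `(G,H)` iff it is a `(0,1)`-regular set of `(G,H)`. -/
def IsPerfectCodeOfPair {G : Type*} [Group G] (H A : Subgroup G) : Prop :=
  IsRegularSetOfPair H A 0 1

/-- A subgroup `A` is an `(r,s)`-regular set of `G` iff it is an `(r,s)`-regular set of
the pair `(G,1)`, i.e. an `(r,s)`-regular set in some Cayley graph of `G`. -/
def IsRegularSetOfGroup {G : Type*} [Group G] (A : Subgroup G) (r s : ℕ) : Prop :=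
  IsRegularSetOfPair ⊥ A r s

/-- A subgroup `A` is a perfect code of `G` iff it is a `(0,1)`-regular set of `G`. -/
def IsPerfectCodeOfGroup {G : Type*} [Group G] (A : Subgroup G) : Prop :=
  IsRegularSetOfGroup A 0 1

/-- The conjugate subgroup `K^t = t⁻¹ K t`. -/
def conjSub {G : Type*} [Group G] (K : Subgroup G) (t : G) : Subgroup G :=
  K.map (MulAut.conj t⁻¹).toMonoidHom

/-- **Corollary.** Let `H ≤ A ⊴ G` and suppose `|A|` or `|G:A|` is odd. Then `A` is a
perfect code of `(G,H)` iff `G = N_G(H)A`. -/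
lemma cosetGraph_adj' {G : Type*} [Group G] {H : Subgroup G} {U : Set G}
    (hU : IsCosetGraphConnectionSet H U) (g₁ g₂ : G) :
    (cosetGraph H U).Adj (QuotientGroup.mk g₁) (QuotientGroup.mk g₂) ↔ g₁⁻¹ * g₂ ∈ U := by
  obtain ⟨hinv, hdisj, hmul⟩ := hU
  have hmem : ∀ {h₁ u h₂ : G}, h₁ ∈ H → u ∈ U → h₂ ∈ H → h₁ * u * h₂ ∈ U := by
    intro h₁ u h₂ hh₁ hu hh₂
    rw [← hmul]
    exact Set.mul_mem_mul (Set.mul_mem_mul hh₁ hu) hh₂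
  rw [cosetGraph, SimpleGraph.fromRel_adj]
  constructor
  · rintro ⟨hne, ⟨a, b, ha, hb, hab⟩ | ⟨a, b, ha, hb, hab⟩⟩
    · have h₁ : a⁻¹ * g₁ ∈ H := QuotientGroup.eq.mp ha
      have h₂ : b⁻¹ * g₂ ∈ H := QuotientGroup.eq.mp hb
      have hcalc : g₁⁻¹ * g₂ = (a⁻¹ * g₁)⁻¹ * (a⁻¹ * b) * (b⁻¹ * g₂) := by group
      rw [hcalc]
      exact hmem (inv_mem h₁) hab h₂
    · have h₁ : a⁻¹ * g₂ ∈ H := QuotientGroup.eq.mp ha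
      have h₂ : b⁻¹ * g₁ ∈ H := QuotientGroup.eq.mp hb
      have hU' : g₂⁻¹ * g₁ ∈ U := by
        have hcalc : g₂⁻¹ * g₁ = (a⁻¹ * g₂)⁻¹ * (a⁻¹ * b) * (b⁻¹ * g₁) := by group
        rw [hcalc]
        exact hmem (inv_mem h₁) hab h₂
      have hcalc : g₁⁻¹ * g₂ = (g₂⁻¹ * g₁)⁻¹ := by group
      rw [hcalc, ← hinv]
      rwa [Set.mem_inv, inv_inv]
  · intro hu
    refine ⟨?_, Or.inl ⟨g₁, g₂, rfl, rfl, hu⟩⟩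
    intro heq
    have hmemboth : g₁⁻¹ * g₂ ∈ (H : Set G) ∩ U := ⟨QuotientGroup.eq.mp heq, hu⟩
    rw [hdisj] at hmemboth
    exact hmemboth

lemma mem_cosetCode' {G : Type*} [Group G] {H A : Subgroup G} (hHA : H ≤ A) (g : G) :
    ((QuotientGroup.mk g : G ⧸ H) ∈ {C : G ⧸ H | ∃ a ∈ A, QuotientGroup.mk a = C}) ↔ g ∈ A := by
  constructor
  · rintro ⟨a, ha, hag⟩
    have h1 : a⁻¹ * g ∈ H := QuotientGroup.eq.mp hag
    have h2 := mul_mem ha (hHA h1)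
    simpa [mul_inv_cancel_left] using h2
  · intro hg
    exact ⟨g, hg, rfl⟩


theorem corollary_oddCase {G : Type*} [Group G] [Fintype G] (H A : Subgroup G)
    (hHA : H ≤ A) (hAnG : A.Normal) (hodd : Odd (Nat.card ↥A) ∨ Odd A.index) :
    IsPerfectCodeOfPair H A ↔
      (Subgroup.normalizer (H : Set G) : Set G) * (A : Set G) = Set.univ := by
  classical
  haveI := hAnG
  constructor
  · rintro ⟨U, hU, hreg⟩
    obtain ⟨hinv, hdisj, hmul⟩ := id hU
    ext g
    simp only [Set.mem_univ, iff_true]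
    rw [Set.mem_mul]
    by_cases hg : g ∈ A
    · exact ⟨1, one_mem _, g, hg, one_mul g⟩
    · have hv : (QuotientGroup.mk g : G ⧸ H) ∉ {C : G ⧸ H | ∃ a ∈ A, QuotientGroup.mk a = C} := by
        rw [mem_cosetCode' hHA]
        exact hg
      have h1 := hreg.2 _ hv
      obtain ⟨w₀, hw₀⟩ := Set.ncard_eq_one.mp h1
      have hw₀mem : w₀ ∈ {w | w ∈ {C : G ⧸ H | ∃ a ∈ A, QuotientGroup.mk a = C} ∧
          (cosetGraph H U).Adj (QuotientGroup.mk g) w} := by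
        rw [hw₀]
        exact Set.mem_singleton w₀
      obtain ⟨⟨b, hb, hbw⟩, hadj⟩ := hw₀mem
      subst hbw
      have hu : g⁻¹ * b ∈ U := (cosetGraph_adj' hU g b).mp hadj
      have hnorm : ∀ h ∈ H, (g⁻¹ * b)⁻¹ * h * ((g⁻¹ * b)⁻¹)⁻¹ ∈ H := by
        intro h hh
        have hbh : g * (h * (g⁻¹ * b)) ∈ A := by
          have hcalc : g * (h * (g⁻¹ * b)) = (g * h * g⁻¹) * b := by group
          rw [hcalc]
          exact mul_mem (hAnG.conj_mem h (hHA hh) g) hb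
        have hadj' : (cosetGraph H U).Adj (QuotientGroup.mk g)
            (QuotientGroup.mk (g * (h * (g⁻¹ * b)))) := by
          rw [cosetGraph_adj' hU]
          have hcalc : g⁻¹ * (g * (h * (g⁻¹ * b))) = h * (g⁻¹ * b) * 1 := by group
          rw [hcalc, ← hmul]
          exact Set.mul_mem_mul (Set.mul_mem_mul hh hu) H.one_mem
        have hin : (QuotientGroup.mk (g * (h * (g⁻¹ * b))) : G ⧸ H) ∈
            {w | w ∈ {C : G ⧸ H | ∃ a ∈ A, QuotientGroup.mk a = C} ∧
              (cosetGraph H U).Adj (QuotientGroup.mk g) w} :=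
          ⟨(mem_cosetCode' hHA _).mpr hbh, hadj'⟩
        have hbin : (QuotientGroup.mk b : G ⧸ H) ∈
            {w | w ∈ {C : G ⧸ H | ∃ a ∈ A, QuotientGroup.mk a = C} ∧
              (cosetGraph H U).Adj (QuotientGroup.mk g) w} :=
          ⟨⟨b, hb, rfl⟩, hadj⟩
        rw [hw₀, Set.mem_singleton_iff] at hin hbin
        have heq : (QuotientGroup.mk (g * (h * (g⁻¹ * b))) : G ⧸ H) = QuotientGroup.mk b := by
          rw [hin, hbin]
        have h2 := inv_mem (QuotientGroup.eq.mp heq)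
        have hcalc : (g⁻¹ * b)⁻¹ * h * ((g⁻¹ * b)⁻¹)⁻¹ =
            ((g * (h * (g⁻¹ * b)))⁻¹ * b)⁻¹ := by group
        rw [hcalc]
        exact h2
      have hNmem : (g⁻¹ * b)⁻¹ ∈ (Subgroup.normalizer (H : Set G)) := by
        have hx := Subgroup.mem_normalizer_fintype (S := (H : Set G)) (x := (g⁻¹ * b)⁻¹)
          (fun n hn => hnorm n hn)
        exact fun n => hx n
      refine ⟨(g⁻¹ * b)⁻¹, hNmem, (g⁻¹ * b) * b * (g⁻¹ * b)⁻¹, hAnG.conj_mem b hb (g⁻¹ * b),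
        by group⟩
  · intro hGNA
    have hsec : ∀ q : G ⧸ A, ∃ n : G, n ∈ (Subgroup.normalizer (H : Set G)) ∧ (QuotientGroup.mk n : G ⧸ A) = q := by
      intro q
      obtain ⟨g, rfl⟩ := QuotientGroup.mk_surjective q
      have hg : g ∈ ((Subgroup.normalizer (H : Set G)) : Set G) * (A : Set G) := by
        rw [hGNA]; exact Set.mem_univ g
      rw [Set.mem_mul] at hg
      obtain ⟨n, hn, a, ha, rfl⟩ := hg
      refine ⟨n, hn, ?_⟩
      rw [QuotientGroup.eq]
      simpa using ha
    have hinvol : ∀ q : G ⧸ A, q ≠ 1 → q * q = 1 →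
        ∃ w : G, w ∈ (Subgroup.normalizer (H : Set G)) ∧ (QuotientGroup.mk w : G ⧸ A) = q ∧ w * w ∈ H := by
      intro q hq1 hq2
      obtain ⟨n, hnN, hnq⟩ := hsec q
      rcases hodd with hA | hI
      · have hn2 : n * n ∈ A := by
          rw [← QuotientGroup.eq_one_iff]
          rw [QuotientGroup.mk_mul, hnq, hq2]
        set m := orderOf (⟨n * n, hn2⟩ : A) with hm
        have hmodd : Odd m := by
          rcases Nat.even_or_odd m with he | ho
          · exfalso
            have hdvd : m ∣ Nat.card ↥A := orderOf_dvd_natCard _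
            have h2 : (2 : ℕ) ∣ Nat.card ↥A := dvd_trans he.two_dvd hdvd
            obtain ⟨i, hi⟩ := h2
            obtain ⟨j, hj⟩ := hA
            omega
          · exact ho
        have hpow : (n * n) ^ m = 1 := by
          have h := pow_orderOf_eq_one (⟨n * n, hn2⟩ : A)
          rw [← hm] at h
          have h' := congrArg (fun x : A => (x : G)) h
          simpa using h'
        refine ⟨n ^ m, pow_mem hnN m, ?_, ?_⟩
        · have h1 : (QuotientGroup.mk (n ^ m) : G ⧸ A) = q ^ m := by
            rw [QuotientGroup.mk_pow, hnq]
          obtain ⟨k, hk⟩ := hmodd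
          rw [h1, hk, pow_add, pow_mul, pow_two, hq2, one_pow, pow_one, one_mul]
        · have hcalc : n ^ m * n ^ m = (n * n) ^ m := by
            rw [← pow_add, ← two_mul, pow_mul, pow_two]
          rw [hcalc, hpow]
          exact one_mem H
      · exfalso
        haveI : Fact (Nat.Prime 2) := ⟨Nat.prime_two⟩
        have h2 : orderOf q = 2 := orderOf_eq_prime (by rw [pow_two]; exact hq2) hq1
        have hdvd : (2 : ℕ) ∣ Nat.card (G ⧸ A) := h2 ▸ orderOf_dvd_natCard q
        have hidx : A.index = Nat.card (G ⧸ A) := rfl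
        rw [hidx] at hI
        obtain ⟨i, hi⟩ := hdvd
        obtain ⟨j, hj⟩ := hI
        omega
    haveI : Fintype (G ⧸ A) := Fintype.ofFinite _
    set e := Fintype.equivFin (G ⧸ A) with he
    choose s hsN hsq using hsec
    have ht : ∃ t : G ⧸ A → G, (∀ q, t q ∈ (Subgroup.normalizer (H : Set G))) ∧
        (∀ q, (QuotientGroup.mk (t q) : G ⧸ A) = q) ∧ (∀ q, t q * t q⁻¹ ∈ H) := by
      refine ⟨fun q => if hq2 : q * q = 1 then
          (if hq1 : q = 1 then 1 else (hinvol q hq1 hq2).choose)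
        else (if e q ≤ e q⁻¹ then s q else (s q⁻¹)⁻¹), ?_, ?_, ?_⟩
      · intro q
        by_cases hq2 : q * q = 1
        · by_cases hq1 : q = 1
          · simp only [dif_pos hq2, dif_pos hq1]
            exact one_mem _
          · simp only [dif_pos hq2, dif_neg hq1]
            exact (hinvol q hq1 hq2).choose_spec.1
        · simp only [dif_neg hq2]
          by_cases hle : e q ≤ e q⁻¹
          · simp only [if_pos hle]
            exact hsN q
          · simp only [if_neg hle]
            exact inv_mem (hsN q⁻¹)
      · intro q
        by_cases hq2 : q * q = 1
        · by_cases hq1 : q = 1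
          · simp only [dif_pos hq2, dif_pos hq1]
            rw [hq1]
            simp
          · simp only [dif_pos hq2, dif_neg hq1]
            exact (hinvol q hq1 hq2).choose_spec.2.1
        · simp only [dif_neg hq2]
          by_cases hle : e q ≤ e q⁻¹
          · simp only [if_pos hle]
            exact hsq q
          · simp only [if_neg hle]
            rw [QuotientGroup.mk_inv, hsq q⁻¹, inv_inv]
      · intro q
        by_cases hq2 : q * q = 1
        · have hqinv : q⁻¹ = q := inv_eq_iff_mul_eq_one.mpr hq2
          rw [hqinv]
          by_cases hq1 : q = 1
          · simp only [dif_pos hq2, dif_pos hq1]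
            simpa using one_mem H
          · simp only [dif_pos hq2, dif_neg hq1]
            exact (hinvol q hq1 hq2).choose_spec.2.2
        · have hq2' : ¬(q⁻¹ * q⁻¹ = 1) := by
            intro h
            apply hq2
            have h2 : (q * q)⁻¹ = 1 := by rw [mul_inv_rev]; exact h
            exact inv_eq_one.mp h2
          have hne : q ≠ q⁻¹ := by
            intro h
            apply hq2
            nth_rewrite 2 [h]
            exact mul_inv_cancel q
          have hene : e q ≠ e q⁻¹ := fun h => hne (e.injective h)
          simp only [dif_neg hq2, dif_neg hq2', inv_inv]
          by_cases hle : e q ≤ e q⁻¹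
          · have hnle : ¬(e q⁻¹ ≤ e q) := fun h => hene (le_antisymm hle h)
            simp only [if_pos hle, if_neg hnle]
            simpa using one_mem H
          · have hle' : e q⁻¹ ≤ e q := le_of_not_ge hle
            simp only [if_neg hle, if_pos hle']
            simpa using one_mem H
    obtain ⟨t, htN, htq, htH⟩ := ht
    set U : Set G := {g : G | (QuotientGroup.mk g : G ⧸ A) ≠ 1 ∧
      (t (QuotientGroup.mk g))⁻¹ * g ∈ H} with hUdef
    have hUmem : ∀ g : G, g ∈ U ↔ ((QuotientGroup.mk g : G ⧸ A) ≠ 1 ∧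
        (t (QuotientGroup.mk g))⁻¹ * g ∈ H) := fun g => Iff.rfl
    have hconj : ∀ n ∈ (Subgroup.normalizer (H : Set G)), ∀ h ∈ H, n⁻¹ * h * n ∈ H := by
      intro n hn h hh
      exact (Subgroup.mem_normalizer_iff''.mp hn h).mp hh
    have hsymmU : ∀ g ∈ U, g⁻¹ ∈ U := by
      intro g hgU
      obtain ⟨hg1, hgH⟩ := (hUmem g).mp hgU
      rw [hUmem]
      constructor
      · rw [QuotientGroup.mk_inv]
        intro h
        exact hg1 (inv_eq_one.mp h)
      · rw [QuotientGroup.mk_inv]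
        have key : (t (QuotientGroup.mk g : G ⧸ A)⁻¹)⁻¹ * g⁻¹ =
            ((t (QuotientGroup.mk g : G ⧸ A)⁻¹)⁻¹ * ((t (QuotientGroup.mk g))⁻¹ * g)⁻¹ *
              (t (QuotientGroup.mk g : G ⧸ A)⁻¹)) *
            (t (QuotientGroup.mk g) * t (QuotientGroup.mk g : G ⧸ A)⁻¹)⁻¹ := by group
        rw [key]
        exact mul_mem (hconj _ (htN _) _ (inv_mem hgH)) (inv_mem (htH _))
    have hUinv : U⁻¹ = U := by
      ext g
      rw [Set.mem_inv]
      constructor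
      · intro h
        have h2 := hsymmU _ h
        rwa [inv_inv] at h2
      · exact fun h => hsymmU g h
    have hUdisj : (H : Set G) ∩ U = ∅ := by
      ext g
      simp only [Set.mem_inter_iff, Set.mem_empty_iff_false, iff_false]
      rintro ⟨hgH, hgU⟩
      exact ((hUmem g).mp hgU).1 ((QuotientGroup.eq_one_iff g).mpr (hHA hgH))
    have hUmul : (H : Set G) * U * (H : Set G) = U := by
      apply subset_antisymm
      · intro x hx
        rw [Set.mem_mul] at hx
        obtain ⟨y, hy, h₂, hh₂, rfl⟩ := hx
        rw [Set.mem_mul] at hy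
        obtain ⟨h₁, hh₁, u, hu, rfl⟩ := hy
        obtain ⟨hu1, huH⟩ := (hUmem u).mp hu
        have e1 : (QuotientGroup.mk h₁ : G ⧸ A) = 1 := (QuotientGroup.eq_one_iff _).mpr (hHA hh₁)
        have e2 : (QuotientGroup.mk h₂ : G ⧸ A) = 1 := (QuotientGroup.eq_one_iff _).mpr (hHA hh₂)
        have hqeq : (QuotientGroup.mk (h₁ * u * h₂) : G ⧸ A) = QuotientGroup.mk u := by
          rw [QuotientGroup.mk_mul, QuotientGroup.mk_mul, e1, e2, one_mul, mul_one]
        rw [hUmem, hqeq]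
        refine ⟨hu1, ?_⟩
        have key : (t (QuotientGroup.mk u))⁻¹ * (h₁ * u * h₂) =
            ((t (QuotientGroup.mk u))⁻¹ * h₁ * (t (QuotientGroup.mk u))) *
            ((t (QuotientGroup.mk u))⁻¹ * u) * h₂ := by group
        rw [key]
        exact mul_mem (mul_mem (hconj _ (htN _) _ hh₁) huH) hh₂
      · intro u hu
        have hcalc : (1 : G) * u * 1 = u := by group
        rw [← hcalc]
        exact Set.mul_mem_mul (Set.mul_mem_mul H.one_mem hu) H.one_mem
    have hUconn : IsCosetGraphConnectionSet H U := ⟨hUinv, hUdisj, hUmul⟩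
    refine ⟨U, hUconn, ?_, ?_⟩
    · rintro v ⟨a, ha, rfl⟩
      have hempty : {w | w ∈ {C : G ⧸ H | ∃ a ∈ A, QuotientGroup.mk a = C} ∧
          (cosetGraph H U).Adj (QuotientGroup.mk a) w} = ∅ := by
        apply Set.eq_empty_iff_forall_notMem.mpr
        rintro w ⟨⟨b, hb, rfl⟩, hadj⟩
        have hu := (cosetGraph_adj' hUconn a b).mp hadj
        exact ((hUmem _).mp hu).1
          ((QuotientGroup.eq_one_iff _).mpr (mul_mem (inv_mem ha) hb))
      rw [hempty, Set.ncard_empty]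
    · intro v hv
      obtain ⟨g, rfl⟩ := QuotientGroup.mk_surjective v
      have hg : g ∉ A := fun h => hv ⟨g, h, rfl⟩
      set q0 : G ⧸ A := (QuotientGroup.mk g)⁻¹ with hq0
      have hq0ne : q0 ≠ 1 := by
        rw [hq0]
        intro h
        exact hg ((QuotientGroup.eq_one_iff g).mp (inv_eq_one.mp h))
      have hmain : {w | w ∈ {C : G ⧸ H | ∃ a ∈ A, QuotientGroup.mk a = C} ∧
          (cosetGraph H U).Adj (QuotientGroup.mk g) w} =
          {QuotientGroup.mk (g * t q0)} := by
        ext w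
        simp only [Set.mem_setOf_eq, Set.mem_singleton_iff]
        constructor
        · rintro ⟨⟨b, hb, rfl⟩, hadj⟩
          have hu := (cosetGraph_adj' hUconn g b).mp hadj
          obtain ⟨h1, h2⟩ := (hUmem _).mp hu
          have hqe : (QuotientGroup.mk (g⁻¹ * b) : G ⧸ A) = q0 := by
            rw [QuotientGroup.mk_mul, QuotientGroup.mk_inv,
              (QuotientGroup.eq_one_iff b).mpr hb, mul_one, hq0]
          rw [hqe] at h2
          refine QuotientGroup.eq.mpr ?_
          have hcalc : b⁻¹ * (g * t q0) = ((t q0)⁻¹ * (g⁻¹ * b))⁻¹ := by group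
          rw [hcalc]
          exact inv_mem h2
        · rintro rfl
          refine ⟨⟨g * t q0, ?_, rfl⟩, ?_⟩
          · apply (QuotientGroup.eq_one_iff _).mp
            rw [QuotientGroup.mk_mul, htq q0, hq0]
            exact mul_inv_cancel _
          · rw [cosetGraph_adj' hUconn]
            have hcalc : g⁻¹ * (g * t q0) = t q0 := by group
            rw [hcalc, hUmem]
            refine ⟨by rw [htq q0]; exact hq0ne, by rw [htq q0]; simpa using one_mem H⟩
      rw [hmain, Set.ncard_singleton]
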